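/- arXiv:1305.4501 — 3 statements merged into one kernel-verified Lean document; each statement's English description precedes it below -/
import Mathlib

section
/- If a, b, c ∈ k and a', b', c' ∈ k satisfy s2(a,b,c) = s2(a',b',c'), s3(a,b,c) = s3(a',b',c'), and s4(a,b,c) = s4(a',b',c'), with a, c, a', c' all nonzero and a^2 + c^2 ≠ 0, then (a',b',c') lies in the orbit of (a,b,c) under the dihedral group generated by τ1 and τ2. -/
/-- If two triples with nonzero `a, c, a', c'` and `a^2 + c^2 ≠ 0` have the same dihedral
invariants `s2 = ac`, `s3 = (a^2+c^2)b`, `s4 = a^4+c^4`, then they are conjugate under the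
dihedral group generated by `τ1` and `τ2`. -/
theorem same_invariants_implies_conjugate (k : Type*) [Field k] [IsAlgClosed k] [CharZero k]
    (ζ : k) (hζ : IsPrimitiveRoot ζ 8)
    (τ1 τ2 : Equiv.Perm (k × k × k))
    (h1 : ∀ p : k × k × k, τ1 p = (ζ ^ 6 * p.1, ζ ^ 4 * p.2.1, ζ ^ 2 * p.2.2))
    (h2 : ∀ p : k × k × k, τ2 p = (p.2.2, p.2.1, p.1))
    (a b c a' b' c' : k)
    (ha : a ≠ 0) (hc : c ≠ 0) (ha' : a' ≠ 0) (hc' : c' ≠ 0)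
    (hac : a ^ 2 + c ^ 2 ≠ 0)
    (hs2 : a * c = a' * c')
    (hs3 : (a ^ 2 + c ^ 2) * b = (a' ^ 2 + c' ^ 2) * b')
    (hs4 : a ^ 4 + c ^ 4 = a' ^ 4 + c' ^ 4) :
    ∃ g ∈ (Subgroup.closure {τ1, τ2} : Subgroup (Equiv.Perm (k × k × k))),
      g (a, b, c) = (a', b', c') := by
  have hm1 : τ1 ∈ Subgroup.closure {τ1, τ2} := Subgroup.subset_closure (by simp)
  have hm2 : τ2 ∈ Subgroup.closure {τ1, τ2} := Subgroup.subset_closure (by simp)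
  have h8 : ζ ^ 8 = 1 := hζ.pow_eq_one
  have h4 : ζ ^ 4 = -1 := by
    have hne : ζ ^ 4 ≠ 1 := hζ.pow_ne_one_of_pos_of_lt (by norm_num) (by norm_num)
    have hsq : (ζ ^ 4 - 1) * (ζ ^ 4 + 1) = 0 := by linear_combination h8
    rcases mul_eq_zero.mp hsq with h | h
    · exact absurd (sub_eq_zero.mp h) hne
    · linear_combination h
  have solveC : ∀ X Y : k, a' = X → X * Y = a * c → c' = Y := by
    intro X Y hX hXY
    have hX0 : X ≠ 0 := hX ▸ ha'
    have hXc : X * c' = X * Y := by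
      calc X * c' = a' * c' := by rw [hX]
        _ = a * c := hs2.symm
        _ = X * Y := hXY.symm
    exact mul_left_cancel₀ hX0 hXc
  have he : (a'^2 + c'^2 - (a^2 + c^2)) * (a'^2 + c'^2 + (a^2 + c^2)) = 0 := by
    linear_combination (-1 : k)*hs4 - 2*(a*c + a'*c')*hs2
  rcases mul_eq_zero.mp he with hA | hB
  · -- a'^2 + c'^2 = a^2 + c^2
    have hA : a'^2 + c'^2 = a^2 + c^2 := sub_eq_zero.mp hA
    have hb : b = b' := mul_left_cancel₀ hac (by rw [hs3, hA])
    have hfA : ((a' - a) * (a' + a)) * ((a' - c) * (a' + c)) = 0 := by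
      linear_combination a'^2*hA + (a*c + a'*c')*hs2
    rcases mul_eq_zero.mp hfA with h | h <;> rcases mul_eq_zero.mp h with h | h
    · -- a' = a, c' = c : identity
      have hav : a' = a := sub_eq_zero.mp h
      have hcv : c' = c := solveC a c hav rfl
      exact ⟨1, one_mem _, by simp [hav, hb, hcv]⟩
    · -- a' = -a, c' = -c : τ1^2
      have hav : a' = -a := eq_neg_of_add_eq_zero_left h
      have hcv : c' = -c := solveC (-a) (-c) hav (by ring)
      refine ⟨τ1 * τ1, mul_mem hm1 hm1, ?_⟩
      simp only [Equiv.Perm.mul_apply, h1]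
      refine Prod.ext ?_ (Prod.ext ?_ ?_)
      · linear_combination a*ζ^4*h8 + a*h4 - hav
      · linear_combination b*h8 + hb
      · linear_combination c*h4 - hcv
    · -- a' = c, c' = a : τ2
      have hav : a' = c := sub_eq_zero.mp h
      have hcv : c' = a := solveC c a hav (by ring)
      refine ⟨τ2, hm2, ?_⟩
      rw [h2]
      refine Prod.ext ?_ (Prod.ext ?_ ?_)
      · linear_combination -hav
      · linear_combination hb
      · linear_combination -hcv
    · -- a' = -c, c' = -a : τ1^2 * τ2
      have hav : a' = -c := eq_neg_of_add_eq_zero_left h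
      have hcv : c' = -a := solveC (-c) (-a) hav (by ring)
      refine ⟨τ1 * τ1 * τ2, mul_mem (mul_mem hm1 hm1) hm2, ?_⟩
      simp only [Equiv.Perm.mul_apply, h1, h2]
      refine Prod.ext ?_ (Prod.ext ?_ ?_)
      · linear_combination c*ζ^4*h8 + c*h4 - hav
      · linear_combination b*h8 + hb
      · linear_combination a*h4 - hcv
  · -- a'^2 + c'^2 = -(a^2 + c^2)
    have hB : a'^2 + c'^2 = -(a^2 + c^2) := eq_neg_of_add_eq_zero_left hB
    have hb : b = -b' := mul_left_cancel₀ hac (by linear_combination hs3 + b'*hB)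
    have hfB : ((a' - ζ^2*a) * (a' + ζ^2*a)) * ((a' - ζ^2*c) * (a' + ζ^2*c)) = 0 := by
      linear_combination a'^2*hB + (a*c + a'*c')*hs2 + (-(a'^2)*(a^2+c^2) + (ζ^4-1)*a^2*c^2)*h4
    rcases mul_eq_zero.mp hfB with h | h <;> rcases mul_eq_zero.mp h with h | h
    · -- a' = ζ^2 a, c' = -ζ^2 c : τ1^3
      have hav : a' = ζ^2*a := sub_eq_zero.mp h
      have hcv : c' = -(ζ^2*c) := solveC (ζ^2*a) (-(ζ^2*c)) hav (by linear_combination (-(a*c))*h4)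
      refine ⟨τ1 * τ1 * τ1, mul_mem (mul_mem hm1 hm1) hm1, ?_⟩
      simp only [Equiv.Perm.mul_apply, h1]
      refine Prod.ext ?_ (Prod.ext ?_ ?_)
      · linear_combination a*ζ^10*h8 + a*ζ^2*h8 - hav
      · linear_combination b*ζ^4*h8 + b*h4 - hb
      · linear_combination c*ζ^2*h4 - hcv
    · -- a' = -ζ^2 a, c' = ζ^2 c : τ1
      have hav : a' = -(ζ^2*a) := eq_neg_of_add_eq_zero_left h
      have hcv : c' = ζ^2*c := solveC (-(ζ^2*a)) (ζ^2*c) hav (by linear_combination (-(a*c))*h4)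
      refine ⟨τ1, hm1, ?_⟩
      rw [h1]
      refine Prod.ext ?_ (Prod.ext ?_ ?_)
      · linear_combination a*ζ^2*h4 - hav
      · linear_combination b*h4 - hb
      · exact hcv.symm
    · -- a' = ζ^2 c, c' = -ζ^2 a : τ1^3 * τ2
      have hav : a' = ζ^2*c := sub_eq_zero.mp h
      have hcv : c' = -(ζ^2*a) := solveC (ζ^2*c) (-(ζ^2*a)) hav (by linear_combination (-(a*c))*h4)
      refine ⟨τ1 * τ1 * τ1 * τ2, mul_mem (mul_mem (mul_mem hm1 hm1) hm1) hm2, ?_⟩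
      simp only [Equiv.Perm.mul_apply, h1, h2]
      refine Prod.ext ?_ (Prod.ext ?_ ?_)
      · linear_combination c*ζ^10*h8 + c*ζ^2*h8 - hav
      · linear_combination b*ζ^4*h8 + b*h4 - hb
      · linear_combination a*ζ^2*h4 - hcv
    · -- a' = -ζ^2 c, c' = ζ^2 a : τ1 * τ2
      have hav : a' = -(ζ^2*c) := eq_neg_of_add_eq_zero_left h
      have hcv : c' = ζ^2*a := solveC (-(ζ^2*c)) (ζ^2*a) hav (by linear_combination (-(a*c))*h4)
      refine ⟨τ1 * τ2, mul_mem hm1 hm2, ?_⟩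
      simp only [Equiv.Perm.mul_apply, h1, h2]
      refine Prod.ext ?_ (Prod.ext ?_ ?_)
      · linear_combination c*ζ^2*h4 - hav
      · linear_combination b*h4 - hb
      · exact hcv.symm
end

section
/- In the D12 case, the dihedral invariants s2, s3, s4 expressed in terms of λ (with s2 = (5-9λ)(5λ-9)/λ, s3 = (3(λ+1)/λ)((5-9λ)^2 + (5λ-9)^2/λ), s4 = (5-9λ)^4/λ + (5λ-9)^4/λ^3) satisfy the polynomial relation s3 = (1/75)(9 s2 - 224)(s2 - 196). -/
/-- In the `D12` case, the invariants `s2 = (5-9λ)(5λ-9)/λ` and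
`s3 = (3(λ+1)/λ)((5-9λ)^2 + (5λ-9)^2/λ)` satisfy
`75·λ^2·s3 = λ^2·(9 s2 - 224)(s2 - 196)`. -/
theorem s3_s2_relation_D12 (k : Type*) [Field k] [CharZero k] (lam s2 s3 : k)
    (hlam : lam ≠ 0)
    (hs2 : s2 = (5 - 9 * lam) * (5 * lam - 9) / lam)
    (hs3 : s3 = (3 * (lam + 1) / lam) * ((5 - 9 * lam) ^ 2 + (5 * lam - 9) ^ 2 / lam)) :
    75 * lam ^ 2 * s3 = lam ^ 2 * ((9 * s2 - 224) * (s2 - 196)) := by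
  subst hs2 hs3
  field_simp
  ring
end

section
/- In the D12 case, the invariants satisfy s4 = -(9/125) s2^3 + (1962/125) s2^2 - (840448/1125) s2 + 9834496/1125, where s2 and s4 are the rational functions of λ given by s2 = (5-9λ)(5λ-9)/λ and s4 = (5-9λ)^4/λ + (5λ-9)^4/λ^3. -/
/-- In the `D12` case, with `s2 = (5-9λ)(5λ-9)/λ` and
`s4 = (5-9λ)^4/λ + (5λ-9)^4/λ^3`, one has
`1125·s4 = -81·s2^3 + 17658·s2^2 - 840448·s2 + 9834496`. -/
theorem s4_s2_relation_D12 (k : Type*) [Field k] [CharZero k] (lam s2 s4 : k)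
    (hlam : lam ≠ 0)
    (hs2 : s2 = (5 - 9 * lam) * (5 * lam - 9) / lam)
    (hs4 : s4 = (5 - 9 * lam) ^ 4 / lam + (5 * lam - 9) ^ 4 / lam ^ 3) :
    1125 * s4 = -81 * s2 ^ 3 + 17658 * s2 ^ 2 - 840448 * s2 + 9834496 := by
  subst hs2 hs4
  field_simp
  ring
end
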